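/- If a sequence of events (e_i) admits a function γ on its Op¹ events satisfying FS1 and FS2, then the canonically defined sequence of states (D_i) — D_0 = ∅, and D_{i+1} obtained from D_i by adding kval(e_i) for non-failed Add events, removing kval(e_i) for non-failed Rem events, and unchanged otherwise — witnesses the state-based specification; in particular, for every i with χ(e_i) ≠ f, kval(e_i) ∈ D_i if and only if χ(e_i) = 1. -/
import Mathlib


/-- Event type: Add, Rem, or Contains. -/
inductive EType | add | rem | cnt
deriving DecidableEq

/-- Status of an event: 0, 1, or f (failed). -/
inductive Status | s0 | s1 | sf
deriving DecidableEq

open EType Status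

/-- If a sequence of events admits a function γ on its Op¹ events
satisfying FS1 and FS2, then the canonically defined sequence of states (D_i)
— D 0 = ∅, D_{i+1} obtained from D_i by adding kval(e_i) for non-failed Add
events, removing kval(e_i) for non-failed Rem events, unchanged otherwise —
witnesses the state-based specification; in particular, for every i with
χ(e_i) ≠ f, kval(e_i) ∈ D_i iff χ(e_i) = 1. -/
theorem stmt3
    (typ : ℕ → EType) (kval : ℕ → ℕ) (χ : ℕ → Status) (γ : ℕ → ℕ)
    (FS1 : ∀ a, χ a = s1 →
      γ a < a ∧ typ (γ a) = add ∧ χ (γ a) = s0 ∧ kval (γ a) = kval a ∧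
      ¬ ∃ r, typ r = rem ∧ χ r = s1 ∧ γ r = γ a ∧ γ a < r ∧ r < a)
    (FS2 : ∀ a b, a < b → typ a = add → χ a = s0 → χ b = s0 → kval a = kval b →
      ∃ r, a < r ∧ r < b ∧ typ r = rem ∧ χ r = s1 ∧ γ r = a)
    (D : ℕ → Finset ℕ)
    (hD0 : D 0 = ∅)
    (hDadd : ∀ i, typ i = add → χ i ≠ sf → D (i + 1) = insert (kval i) (D i))
    (hDrem : ∀ i, typ i = rem → χ i ≠ sf → D (i + 1) = (D i).erase (kval i))
    (hDsame : ∀ i, typ i = cnt ∨ χ i = sf → D (i + 1) = D i) :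
    ∀ i, χ i ≠ sf → (kval i ∈ D i ↔ χ i = s1) := by
  have hγlt : ∀ r, χ r = s1 → γ r < r := fun r h => (FS1 r h).1
  have key : ∀ i k, k ∈ D i ↔ ∃ a, a < i ∧ typ a = add ∧ χ a = s0 ∧ kval a = k ∧
      ∀ r, r < i → typ r = rem → χ r = s1 → γ r ≠ a := by
    intro i
    induction i with
    | zero => intro k; simp [hD0]
    | succ i ih =>
      have step : ∀ k, ¬(typ i = add ∧ χ i = s0 ∧ kval i = k) →
          (∀ a, typ a = add → kval a = k → typ i = rem → χ i = s1 → γ i ≠ a) →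
          ((∃ a, a < i + 1 ∧ typ a = add ∧ χ a = s0 ∧ kval a = k ∧
              ∀ r, r < i + 1 → typ r = rem → χ r = s1 → γ r ≠ a) ↔
           (∃ a, a < i ∧ typ a = add ∧ χ a = s0 ∧ kval a = k ∧
              ∀ r, r < i → typ r = rem → χ r = s1 → γ r ≠ a)) := by
        intro k h1 h2
        constructor
        · rintro ⟨a, ha, ht, hχ, hk, hcl⟩
          rcases Nat.lt_succ_iff_lt_or_eq.mp ha with ha' | rfl
          · exact ⟨a, ha', ht, hχ, hk,
              fun r hr => hcl r (hr.trans (Nat.lt_succ_self i))⟩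
          · exact absurd ⟨ht, hχ, hk⟩ h1
        · rintro ⟨a, ha, ht, hχ, hk, hcl⟩
          refine ⟨a, ha.trans (Nat.lt_succ_self i), ht, hχ, hk,
            fun r hr hrt hrχ => ?_⟩
          rcases Nat.lt_succ_iff_lt_or_eq.mp hr with hr' | rfl
          · exact hcl r hr' hrt hrχ
          · exact h2 a ht hk hrt hrχ
      intro k
      by_cases hsf : χ i = sf
      · rw [hDsame i (Or.inr hsf), ih k]
        exact (step k (fun h => Status.noConfusion (hsf.symm.trans h.2.1))
          (fun a _ _ _ hrχ => absurd (hsf.symm.trans hrχ) (by decide))).symm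
      · cases hty : typ i with
        | cnt =>
          rw [hDsame i (Or.inl hty), ih k]
          exact (step k (fun h => EType.noConfusion (hty.symm.trans h.1))
            (fun a _ _ hrt _ => absurd (hty.symm.trans hrt) (by decide))).symm
        | add =>
          rw [hDadd i hty hsf, Finset.mem_insert]
          by_cases hk : kval i = k
          · refine iff_of_true (Or.inl hk.symm) ?_
            cases hχi : χ i with
            | sf => exact absurd hχi hsf
            | s0 =>
              refine ⟨i, Nat.lt_succ_self i, hty, hχi, hk,
                fun r hr hrt hrχ hγr => ?_⟩
              have := hγlt r hrχ
              omega
            | s1 =>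
              obtain ⟨hlt, haddγ, hχγ, hkγ, hno⟩ := FS1 i hχi
              refine ⟨γ i, hlt.trans (Nat.lt_succ_self i), haddγ, hχγ,
                hkγ.trans hk, fun r hr hrt hrχ hγr => ?_⟩
              rcases Nat.lt_succ_iff_lt_or_eq.mp hr with hr' | rfl
              · rcases lt_or_ge (γ i) r with h | h
                · exact hno ⟨r, hrt, hrχ, hγr, h, hr'⟩
                · have := hγlt r hrχ; omega
              · exact EType.noConfusion (hty.symm.trans hrt)
          · have hmem : (k = kval i ∨ k ∈ D i) ↔ k ∈ D i := by
              constructor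
              · rintro (h | h)
                · exact absurd h.symm hk
                · exact h
              · exact Or.inr
            rw [hmem, ih k]
            exact (step k (fun h => hk h.2.2)
              (fun a _ _ hrt _ => absurd (hty.symm.trans hrt) (by decide))).symm
        | rem =>
          rw [hDrem i hty hsf, Finset.mem_erase]
          by_cases hk : kval i = k
          · refine iff_of_false (fun h => h.1 hk.symm) ?_
            rintro ⟨a, ha, hta, hχa, hka, hcl⟩
            have ha' : a < i := by
              rcases Nat.lt_succ_iff_lt_or_eq.mp ha with h | rfl
              · exact h
              · exact absurd (hty.symm.trans hta) (by decide)
            cases hχi : χ i with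
            | sf => exact hsf hχi
            | s0 =>
              obtain ⟨r, hr1, hr2, hr3, hr4, hr5⟩ :=
                FS2 a i ha' hta hχa hχi (hka.trans hk.symm)
              exact hcl r (hr2.trans (Nat.lt_succ_self i)) hr3 hr4 hr5
            | s1 =>
              obtain ⟨hlt, haddγ, hχγ, hkγ, hno⟩ := FS1 i hχi
              have heq : a = γ i := by
                rcases lt_trichotomy a (γ i) with h | h | h
                · obtain ⟨r, hr1, hr2, hr3, hr4, hr5⟩ :=
                    FS2 a (γ i) h hta hχa hχγ (hka.trans (hkγ.trans hk).symm)
                  exact absurd hr5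
                    (hcl r ((hr2.trans hlt).trans (Nat.lt_succ_self i)) hr3 hr4)
                · exact h
                · obtain ⟨r, hr1, hr2, hr3, hr4, hr5⟩ :=
                    FS2 (γ i) a h haddγ hχγ hχa (hkγ.trans (hk.trans hka.symm))
                  exact (hno ⟨r, hr3, hr4, hr5, hr1, hr2.trans ha'⟩).elim
              exact hcl i (Nat.lt_succ_self i) hty hχi heq.symm
          · have hmem : (k ≠ kval i ∧ k ∈ D i) ↔ k ∈ D i := by
              constructor
              · exact And.right
              · exact fun h => ⟨fun h' => hk h'.symm, h⟩
            rw [hmem, ih k]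
            refine (step k (fun h => EType.noConfusion (hty.symm.trans h.1)) ?_).symm
            intro a hta hka hrt hrχ hγa
            obtain ⟨_, _, _, hkγ, _⟩ := FS1 i hrχ
            rw [hγa, hka] at hkγ
            exact hk hkγ.symm
  intro i hf
  rw [key i (kval i)]
  constructor
  · rintro ⟨a, ha, hta, hχa, hka, hcl⟩
    cases hχi : χ i with
    | sf => exact absurd hχi hf
    | s1 => rfl
    | s0 =>
      obtain ⟨r, hr1, hr2, hr3, hr4, hr5⟩ := FS2 a i ha hta hχa hχi hka
      exact absurd hr5 (hcl r hr2 hr3 hr4)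
  · intro h1
    obtain ⟨hlt, haddγ, hχγ, hkγ, hno⟩ := FS1 i h1
    refine ⟨γ i, hlt, haddγ, hχγ, hkγ, fun r hr hrt hrχ hγr => ?_⟩
    rcases lt_or_ge (γ i) r with h | h
    · exact hno ⟨r, hrt, hrχ, hγr, h, hr⟩
    · have := hγlt r hrχ; omega
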